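/- If P₁,…,P_K are random variables such that the variables indexed by 𝒩 are i.i.d. uniform on [0,1] and independent of the others, and F(t) = |{k ∈ 𝒩 : P_k ≤ t}|, then for 0 < s ≤ t ≤ 1, E[F(s) | 𝓕_t] = (s/t)·F(t), where 𝓕_t = σ{(1{P₁≤u},…,1{P_K≤u}) : u ∈ [t,1]}; i.e., t ↦ F(t)/t is a backward martingale on (0,1]. -/

import Mathlib

open MeasureTheory ProbabilityTheory Finset
open scoped ENNReal Classical

noncomputable section

/-- The `i`-th smallest value (0-indexed) among `p 0, …, p (K-1)`. -/
def sortAsc {K : ℕ} (p : Fin K → ℝ) : Fin K → ℝ := p ∘ Tuple.sort p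

/-- The `i`-th largest value (0-indexed) among `e 0, …, e (K-1)`. -/
def sortDesc {K : ℕ} (e : Fin K → ℝ) : Fin K → ℝ := e ∘ Tuple.sort (fun j => -e j)

/-- `k* = max {k : K p_(k) / k ≤ α}` (with `max ∅ = 0`), the BH rejection count. -/
def bhCount (K : ℕ) (α : ℝ) (p : Fin K → ℝ) : ℕ :=
  (univ.filter (fun i : Fin K => (K : ℝ) * sortAsc p i / (i.1 + 1) ≤ α)).sup
    (fun i => i.1 + 1)

/-- The BH procedure rejects the hypotheses carrying the `k*` smallest p-values. -/
def bhRejects (K : ℕ) (α : ℝ) (p : Fin K → ℝ) : Finset (Fin K) :=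
  univ.filter (fun k => ∃ i : Fin K, i.1 + 1 ≤ bhCount K α p ∧ p k ≤ sortAsc p i)

/-- `k* = max {k : k e_[k] / K ≥ 1/α}`, the e-BH rejection count. -/
def ebhCount (K : ℕ) (α : ℝ) (e : Fin K → ℝ) : ℕ :=
  (univ.filter (fun i : Fin K => 1 / α ≤ (i.1 + 1) * sortDesc e i / K)).sup
    (fun i => i.1 + 1)

/-- The e-BH procedure rejects the hypotheses carrying the `k*` largest e-values. -/
def ebhRejects (K : ℕ) (α : ℝ) (e : Fin K → ℝ) : Finset (Fin K) :=
  univ.filter (fun k => ∃ i : Fin K, i.1 + 1 ≤ ebhCount K α e ∧ sortDesc e i ≤ e k)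

/-- Simes function `S_K(p) = min_k (K/k) p_(k)`. -/
def simes (K : ℕ) (p : Fin K → ℝ) : ℝ := ⨅ i : Fin K, (K : ℝ) / (i.1 + 1) * sortAsc p i

/-- Harmonic number `ℓ_K = ∑_{k=1}^K 1/k`. -/
def harm (K : ℕ) : ℝ := ∑ k ∈ Finset.Icc 1 K, (1 : ℝ) / k

/-- An increasing (upper) subset of `ℝ^K`. -/
def IncreasingSet {K : ℕ} (A : Set (Fin K → ℝ)) : Prop := ∀ x ∈ A, ∀ y, x ≤ y → y ∈ A

/-- Positive regression dependence on the subset `N` of nulls. -/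
def PRDS {Ω : Type*} [MeasurableSpace Ω] (μ : Measure Ω) {K : ℕ}
    (P : Fin K → Ω → ℝ) (N : Finset (Fin K)) : Prop :=
  ∀ k ∈ N, ∀ A : Set (Fin K → ℝ), MeasurableSet A → IncreasingSet A →
    Monotone (fun x : ℝ => μ[|{ω | P k ω ≤ x}] {ω | (fun j => P j ω) ∈ A})

/-- False discovery proportion of a rejection set `D` w.r.t. the null set `N`. -/
def fdp {K : ℕ} (D N : Finset (Fin K)) : ℝ := ((D ∩ N).card : ℝ) / (max D.card 1 : ℕ)

end

section AuxBM
set_option linter.unusedSectionVars false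
set_option linter.unusedVariables false
variable {Ω : Type*} [MeasurableSpace Ω] {μ : Measure Ω} [IsProbabilityMeasure μ]
variable {K : ℕ} {P : Fin K → Ω → ℝ} {N : Finset (Fin K)}

lemma bm_meas_le_eq (hP : ∀ k, Measurable (P k))
    (h_unif : ∀ k ∈ N, μ.map (P k) = volume.restrict (Set.Icc (0 : ℝ) 1))
    {k : Fin K} (hk : k ∈ N) {c : ℝ} (hc0 : 0 ≤ c) (hc1 : c ≤ 1) :
    μ {ω | P k ω ≤ c} = ENNReal.ofReal c := by
  have h1 : {ω | P k ω ≤ c} = P k ⁻¹' Set.Iic c := rfl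
  rw [h1, ← Measure.map_apply (hP k) measurableSet_Iic, h_unif k hk,
    Measure.restrict_apply measurableSet_Iic]
  have h2 : Set.Iic c ∩ Set.Icc 0 1 = Set.Icc 0 c := by
    ext x
    simp only [Set.mem_inter_iff, Set.mem_Iic, Set.mem_Icc]
    constructor
    · rintro ⟨ha, hb, _⟩; exact ⟨hb, ha⟩
    · rintro ⟨ha, hb⟩; exact ⟨hb, ha, hb.trans hc1⟩
  rw [h2, Real.volume_Icc, sub_zero]

lemma bm_indep_rest (hP : ∀ k, Measurable (P k))
    (h_iid : iIndepFun (fun k : {k // k ∈ N} => P k.1) μ)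
    (h_block : IndepFun (fun ω => fun k : {k // k ∈ N} => P k.1 ω)
      (fun ω => fun k : {k // k ∉ N} => P k.1 ω) μ)
    {k : Fin K} (hk : k ∈ N) :
    Indep (MeasurableSpace.comap (P k) inferInstance)
      ((⨆ j ∈ ({(⟨k, hk⟩ : {j // j ∈ N})}ᶜ : Set {j // j ∈ N}),
          MeasurableSpace.comap (P j.1) inferInstance) ⊔
        MeasurableSpace.comap (fun ω (j : {j // j ∉ N}) => P j.1 ω) inferInstance) μ := by
  classical
  have hcomap_le_null : ∀ j : {j // j ∈ N},
      MeasurableSpace.comap (P j.1) inferInstance ≤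
        MeasurableSpace.comap (fun ω (j : {j // j ∈ N}) => P j.1 ω) inferInstance := by
    intro j
    have h1 : P j.1 = (fun x : {j // j ∈ N} → ℝ => x j) ∘ (fun ω (j : {j // j ∈ N}) => P j.1 ω) :=
      rfl
    rw [h1, ← MeasurableSpace.comap_comp]
    exact MeasurableSpace.comap_mono (measurable_pi_apply j).comap_le
  have hXY : Indep (MeasurableSpace.comap (P k) inferInstance)
      (⨆ j ∈ ({(⟨k, hk⟩ : {j // j ∈ N})}ᶜ : Set {j // j ∈ N}),
        MeasurableSpace.comap (P j.1) inferInstance) μ := by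
    have h := indep_biSup_compl (fun j : {j // j ∈ N} => (hP j.1).comap_le) h_iid.iIndep
      {(⟨k, hk⟩ : {j // j ∈ N})}
    rw [_root_.iSup_singleton] at h
    exact h
  have hYnull : (⨆ j ∈ ({(⟨k, hk⟩ : {j // j ∈ N})}ᶜ : Set {j // j ∈ N}),
      MeasurableSpace.comap (P j.1) inferInstance) ≤
      MeasurableSpace.comap (fun ω (j : {j // j ∈ N}) => P j.1 ω) inferInstance :=
    iSup₂_le fun j _ => hcomap_le_null j
  have hnullMeas : Measurable (fun ω (j : {j // j ∈ N}) => P j.1 ω) :=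
    measurable_pi_lambda _ fun j => hP j.1
  have hnonnullMeas : Measurable (fun ω (j : {j // j ∉ N}) => P j.1 ω) :=
    measurable_pi_lambda _ fun j => hP j.1
  refine IndepSets.indep
    (p2 := {S : Set Ω | ∃ B C,
      MeasurableSet[⨆ j ∈ ({(⟨k, hk⟩ : {j // j ∈ N})}ᶜ : Set {j // j ∈ N}),
        MeasurableSpace.comap (P j.1) inferInstance] B ∧
      MeasurableSet[MeasurableSpace.comap (fun ω (j : {j // j ∉ N}) => P j.1 ω) inferInstance] C ∧
      S = B ∩ C})
    ((hP k).comap_le)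
    (sup_le (hYnull.trans hnullMeas.comap_le) hnonnullMeas.comap_le)
    (@MeasurableSpace.isPiSystem_measurableSet Ω (MeasurableSpace.comap (P k) inferInstance))
    ?_ (@MeasurableSpace.generateFrom_measurableSet Ω
      (MeasurableSpace.comap (P k) inferInstance)).symm ?_ ?_
  · rintro _ ⟨B, C, hB, hC, rfl⟩ _ ⟨B', C', hB', hC', rfl⟩ _
    exact ⟨B ∩ B', C ∩ C', hB.inter hB', hC.inter hC', by
      ext ω; simp only [Set.mem_inter_iff]; tauto⟩
  · refine le_antisymm (sup_le ?_ ?_) (MeasurableSpace.generateFrom_le ?_)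
    · conv_lhs => rw [← @MeasurableSpace.generateFrom_measurableSet Ω
        (⨆ j ∈ ({(⟨k, hk⟩ : {j // j ∈ N})}ᶜ : Set {j // j ∈ N}),
          MeasurableSpace.comap (P j.1) inferInstance)]
      exact MeasurableSpace.generateFrom_mono fun s hs =>
        ⟨s, Set.univ, hs, MeasurableSet.univ, (Set.inter_univ s).symm⟩
    · conv_lhs => rw [← @MeasurableSpace.generateFrom_measurableSet Ω
        (MeasurableSpace.comap (fun ω (j : {j // j ∉ N}) => P j.1 ω) inferInstance)]
      exact MeasurableSpace.generateFrom_mono fun s hs =>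
        ⟨Set.univ, s, MeasurableSet.univ, hs, (Set.univ_inter s).symm⟩
    · rintro _ ⟨B, C, hB, hC, rfl⟩
      have hl : (⨆ j ∈ ({(⟨k, hk⟩ : {j // j ∈ N})}ᶜ : Set {j // j ∈ N}),
          MeasurableSpace.comap (P j.1) inferInstance) ≤
          (⨆ j ∈ ({(⟨k, hk⟩ : {j // j ∈ N})}ᶜ : Set {j // j ∈ N}),
            MeasurableSpace.comap (P j.1) inferInstance) ⊔
          MeasurableSpace.comap (fun ω (j : {j // j ∉ N}) => P j.1 ω) inferInstance := le_sup_left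
      have hr : MeasurableSpace.comap (fun ω (j : {j // j ∉ N}) => P j.1 ω) inferInstance ≤
          (⨆ j ∈ ({(⟨k, hk⟩ : {j // j ∈ N})}ᶜ : Set {j // j ∈ N}),
            MeasurableSpace.comap (P j.1) inferInstance) ⊔
          MeasurableSpace.comap (fun ω (j : {j // j ∉ N}) => P j.1 ω) inferInstance := le_sup_right
      exact MeasurableSet.inter (hl _ hB) (hr _ hC)
  · rw [IndepSets_iff]
    rintro A _ hA ⟨B, C, hB, hC, rfl⟩
    have hAnull : MeasurableSet[MeasurableSpace.comap
        (fun ω (j : {j // j ∈ N}) => P j.1 ω) inferInstance] A :=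
      hcomap_le_null ⟨k, hk⟩ _ hA
    have hBnull : MeasurableSet[MeasurableSpace.comap
        (fun ω (j : {j // j ∈ N}) => P j.1 ω) inferInstance] B := hYnull _ hB
    have h1 : μ ((A ∩ B) ∩ C) = μ (A ∩ B) * μ C :=
      h_block.meas_inter (hAnull.inter hBnull) hC
    have h2 : μ (A ∩ B) = μ A * μ B := (Indep_iff _ _ _).1 hXY _ _ hA hB
    have h3 : μ (B ∩ C) = μ B * μ C := h_block.meas_inter hBnull hC
    calc μ (A ∩ (B ∩ C)) = μ ((A ∩ B) ∩ C) := by rw [Set.inter_assoc]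
      _ = μ A * μ B * μ C := by rw [h1, h2]
      _ = μ A * μ (B ∩ C) := by rw [h3, mul_assoc]

lemma bm_meas_pre {Ω : Type*} {m : MeasurableSpace Ω} {K : ℕ} (k : Fin K)
    (R : Fin K → Ω → ℝ) (u : ℝ) (hR : ∀ j, j ≠ k → MeasurableSet {ω | R j ω ≤ u})
    {S : Set (Fin K → ℝ)} (hS : MeasurableSet S) :
    MeasurableSet ((fun ω => fun j : Fin K => if j = k then (1 : ℝ)
      else if R j ω ≤ u then 1 else 0) ⁻¹' S) := by
  have hf : Measurable (fun ω => fun j : Fin K => if j = k then (1 : ℝ)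
      else if R j ω ≤ u then 1 else 0) := by
    refine measurable_pi_lambda _ fun j => ?_
    by_cases hjk : j = k
    · simp only [if_pos hjk]
      exact measurable_const
    · simp only [if_neg hjk]
      exact Measurable.ite (hR j hjk) measurable_const measurable_const
  exact hf hS

lemma bm_meas_target {Ω : Type*} {m : MeasurableSpace Ω} {K : ℕ} (N : Finset (Fin K))
    (R : Fin K → Ω → ℝ) (c u : ℝ) (hR : ∀ k ∈ N, MeasurableSet {ω | R k ω ≤ u}) :
    Measurable fun ω => c * ((N.filter (fun k => R k ω ≤ u)).card : ℝ) := by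
  classical
  have h1 : (fun ω => c * ((N.filter (fun k => R k ω ≤ u)).card : ℝ))
      = fun ω => c * ∑ k ∈ N, (if R k ω ≤ u then (1 : ℝ) else 0) := by
    funext ω
    rw [Finset.card_filter]
    push_cast
    rfl
  rw [h1]
  exact (Finset.measurable_sum N fun k hk =>
    Measurable.ite (hR k hk) measurable_const measurable_const).const_mul c

/-- The key per-coordinate identity. -/
lemma bm_key (hP : ∀ k, Measurable (P k))
    (h_unif : ∀ k ∈ N, μ.map (P k) = volume.restrict (Set.Icc (0 : ℝ) 1))
    (h_iid : iIndepFun (fun k : {k // k ∈ N} => P k.1) μ)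
    (h_block : IndepFun (fun ω => fun k : {k // k ∈ N} => P k.1 ω)
      (fun ω => fun k : {k // k ∉ N} => P k.1 ω) μ)
    {s t : ℝ} (hs : 0 < s) (hst : s ≤ t) (ht : t ≤ 1)
    {k : Fin K} (hk : k ∈ N) {A : Set Ω}
    (hA : MeasurableSet[⨆ u ∈ Set.Icc t (1 : ℝ), MeasurableSpace.comap
      (fun ω => fun k : Fin K => if P k ω ≤ u then (1 : ℝ) else 0) inferInstance] A) :
    μ (A ∩ {ω | P k ω ≤ s}) = ENNReal.ofReal (s / t) * μ (A ∩ {ω | P k ω ≤ t}) := by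
  classical
  have ht0 : 0 < t := lt_of_lt_of_le hs hst
  have hIndep := bm_indep_rest hP h_iid h_block hk (μ := μ)
  have hμEs : μ {ω | P k ω ≤ s} = ENNReal.ofReal s :=
    bm_meas_le_eq hP h_unif hk hs.le (hst.trans ht)
  have hμEt : μ {ω | P k ω ≤ t} = ENNReal.ofReal t :=
    bm_meas_le_eq hP h_unif hk ht0.le ht
  have hfrac : ENNReal.ofReal s = ENNReal.ofReal (s / t) * ENNReal.ofReal t := by
    rw [← ENNReal.ofReal_mul (div_nonneg hs.le ht0.le), div_mul_cancel₀ _ ht0.ne']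
  have hEcMeas : ∀ c : ℝ, MeasurableSet {ω | P k ω ≤ c} := fun c =>
    measurableSet_le (hP k) measurable_const
  -- events measurable w.r.t. the "rest" σ-algebra
  have hsetRest : ∀ j : Fin K, j ≠ k → ∀ u : ℝ,
      MeasurableSet[(⨆ j ∈ ({(⟨k, hk⟩ : {j // j ∈ N})}ᶜ : Set {j // j ∈ N}),
          MeasurableSpace.comap (P j.1) inferInstance) ⊔
        MeasurableSpace.comap (fun ω (j : {j // j ∉ N}) => P j.1 ω) inferInstance]
        {ω | P j ω ≤ u} := by
    intro j hj u
    by_cases hjN : j ∈ N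
    · have h1 : MeasurableSpace.comap (P j) inferInstance ≤
          (⨆ j ∈ ({(⟨k, hk⟩ : {j // j ∈ N})}ᶜ : Set {j // j ∈ N}),
            MeasurableSpace.comap (P j.1) inferInstance) ⊔
          MeasurableSpace.comap (fun ω (j : {j // j ∉ N}) => P j.1 ω) inferInstance := by
        refine le_trans ?_ le_sup_left
        exact le_iSup₂ (f := fun (j' : {j // j ∈ N})
          (_ : j' ∈ ({(⟨k, hk⟩ : {j // j ∈ N})}ᶜ : Set {j // j ∈ N})) =>
          MeasurableSpace.comap (P j'.1) inferInstance) ⟨j, hjN⟩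
          (fun h => hj (congrArg Subtype.val h))
      exact h1 _ ⟨Set.Iic u, measurableSet_Iic, rfl⟩
    · have h2 : MeasurableSpace.comap (fun ω (j : {j // j ∉ N}) => P j.1 ω) inferInstance ≤
          (⨆ j ∈ ({(⟨k, hk⟩ : {j // j ∈ N})}ᶜ : Set {j // j ∈ N}),
            MeasurableSpace.comap (P j.1) inferInstance) ⊔
          MeasurableSpace.comap (fun ω (j : {j // j ∉ N}) => P j.1 ω) inferInstance := le_sup_right
      refine h2 _ ⟨{x : {j // j ∉ N} → ℝ | x ⟨j, hjN⟩ ≤ u},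
        measurableSet_le (measurable_pi_apply _) measurable_const, rfl⟩
  have hBstep : ∀ B : Set Ω,
      MeasurableSet[(⨆ j ∈ ({(⟨k, hk⟩ : {j // j ∈ N})}ᶜ : Set {j // j ∈ N}),
          MeasurableSpace.comap (P j.1) inferInstance) ⊔
        MeasurableSpace.comap (fun ω (j : {j // j ∉ N}) => P j.1 ω) inferInstance] B →
      ∀ c : ℝ, μ (B ∩ {ω | P k ω ≤ c}) = μ B * μ {ω | P k ω ≤ c} := by
    intro B hB c
    rw [Set.inter_comm]
    exact ((Indep_iff _ _ _).1 hIndep {ω | P k ω ≤ c} B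
      ⟨Set.Iic c, measurableSet_Iic, rfl⟩ hB).trans (mul_comm _ _)
  -- π-λ induction
  have h_eq : (⨆ u ∈ Set.Icc t (1 : ℝ), MeasurableSpace.comap
      (fun ω => fun k : Fin K => if P k ω ≤ u then (1 : ℝ) else 0) inferInstance)
      = MeasurableSpace.generateFrom (piiUnionInter
        (fun u : ℝ => {A : Set Ω | MeasurableSet[MeasurableSpace.comap
          (fun ω => fun k : Fin K => if P k ω ≤ u then (1 : ℝ) else 0) inferInstance] A})
        (Set.Icc t 1)) :=
    (generateFrom_piiUnionInter_measurableSet _ _).symm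
  revert hA
  refine MeasurableSpace.induction_on_inter
    (C := fun A _ => μ (A ∩ {ω | P k ω ≤ s}) = ENNReal.ofReal (s / t) * μ (A ∩ {ω | P k ω ≤ t}))
    (s := piiUnionInter
      (fun u : ℝ => {A : Set Ω | MeasurableSet[MeasurableSpace.comap
        (fun ω => fun k : Fin K => if P k ω ≤ u then (1 : ℝ) else 0) inferInstance] A})
      (Set.Icc t 1))
    (m := ⨆ u ∈ Set.Icc t (1 : ℝ), MeasurableSpace.comap
      (fun ω => fun k : Fin K => if P k ω ≤ u then (1 : ℝ) else 0) inferInstance)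
    h_eq (isPiSystem_piiUnionInter _ (fun u : ℝ =>
      @MeasurableSpace.isPiSystem_measurableSet Ω (MeasurableSpace.comap
        (fun ω => fun k : Fin K => if P k ω ≤ u then (1 : ℝ) else 0) inferInstance)) _)
    (by simp) ?_ ?_ ?_ A
  · -- basic
    rintro A ⟨F, hFS, f, hf, rfl⟩
    choose! S hSmeas hSpre using fun u (hu : u ∈ F) => hf u hu
    set B : Set Ω := ⋂ u ∈ F, (fun ω => fun j : Fin K =>
      if j = k then (1 : ℝ) else if P j ω ≤ u then 1 else 0) ⁻¹' S u with hBdef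
    have hAB : ∀ c : ℝ, c ≤ t →
        (⋂ u ∈ F, f u) ∩ {ω | P k ω ≤ c} = B ∩ {ω | P k ω ≤ c} := by
      intro c hc
      ext ω
      simp only [Set.mem_inter_iff, Set.mem_iInter, Set.mem_setOf_eq, hBdef, Set.mem_preimage]
      constructor
      · rintro ⟨h1, h2⟩
        refine ⟨fun u hu => ?_, h2⟩
        have hgh : (fun j : Fin K => if j = k then (1 : ℝ) else if P j ω ≤ u then 1 else 0)
            = fun j : Fin K => if P j ω ≤ u then (1 : ℝ) else 0 := by
          funext j
          by_cases hjk : j = k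
          · subst hjk
            have : P j ω ≤ u := le_trans (le_trans h2 hc) (hFS hu).1
            simp [this]
          · simp [hjk]
        have h3 := h1 u hu
        rw [← hSpre u hu] at h3
        have h4 : (fun j : Fin K => if P j ω ≤ u then (1 : ℝ) else 0) ∈ S u := h3
        show (fun j : Fin K => if j = k then (1 : ℝ) else if P j ω ≤ u then 1 else 0) ∈ S u
        rw [hgh]
        exact h4
      · rintro ⟨h1, h2⟩
        refine ⟨fun u hu => ?_, h2⟩
        have hgh : (fun j : Fin K => if j = k then (1 : ℝ) else if P j ω ≤ u then 1 else 0)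
            = fun j : Fin K => if P j ω ≤ u then (1 : ℝ) else 0 := by
          funext j
          by_cases hjk : j = k
          · subst hjk
            have : P j ω ≤ u := le_trans (le_trans h2 hc) (hFS hu).1
            simp [this]
          · simp [hjk]
        have h4 : (fun j : Fin K => if j = k then (1 : ℝ) else if P j ω ≤ u then 1 else 0)
            ∈ S u := h1 u hu
        rw [hgh] at h4
        rw [← hSpre u hu]
        exact h4
    have hBmeas : MeasurableSet[(⨆ j ∈ ({(⟨k, hk⟩ : {j // j ∈ N})}ᶜ : Set {j // j ∈ N}),
          MeasurableSpace.comap (P j.1) inferInstance) ⊔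
        MeasurableSpace.comap (fun ω (j : {j // j ∉ N}) => P j.1 ω) inferInstance] B := by
      refine Finset.measurableSet_biInter _ fun u hu => ?_
      exact bm_meas_pre k P u (fun j hj => hsetRest j hj u) (hSmeas u hu)
    rw [hAB s (hst), hAB t le_rfl, hBstep B hBmeas s, hBstep B hBmeas t, hμEs, hμEt, hfrac]
    ring
  · -- compl
    intro A hA hIH
    have hA0 : MeasurableSet A := by
      have hmle : (⨆ u ∈ Set.Icc t (1 : ℝ), MeasurableSpace.comap
          (fun ω => fun k : Fin K => if P k ω ≤ u then (1 : ℝ) else 0) inferInstance)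
          ≤ (inferInstance : MeasurableSpace Ω) := by
        refine iSup_le fun u => iSup_le fun hu => Measurable.comap_le ?_
        exact measurable_pi_lambda _ fun j =>
          Measurable.ite (measurableSet_le (hP j) measurable_const) measurable_const
            measurable_const
      exact hmle _ hA
    have hdiff : ∀ E : Set Ω, Aᶜ ∩ E = E \ A := by
      intro E; ext ω; simp only [Set.mem_inter_iff, Set.mem_compl_iff, Set.mem_diff]; tauto
    rw [hdiff, hdiff]
    have h1 := measure_inter_add_diff (μ := μ) {ω | P k ω ≤ s} hA0
    have h2 := measure_inter_add_diff (μ := μ) {ω | P k ω ≤ t} hA0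
    have h3 : μ ({ω | P k ω ≤ s} ∩ A) = ENNReal.ofReal (s / t) * μ ({ω | P k ω ≤ t} ∩ A) := by
      rw [Set.inter_comm, Set.inter_comm _ A]; exact hIH
    have h4 : μ ({ω | P k ω ≤ s} ∩ A) + μ ({ω | P k ω ≤ s} \ A)
        = μ ({ω | P k ω ≤ s} ∩ A) + ENNReal.ofReal (s / t) * μ ({ω | P k ω ≤ t} \ A) := by
      rw [h1, hμEs, hfrac, ← hμEt, ← h2, mul_add, ← h3]
    exact (ENNReal.add_right_inj (measure_ne_top μ _)).1 h4
  · -- union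
    intro f hdisj hfmeas hIH
    have hmle : (⨆ u ∈ Set.Icc t (1 : ℝ), MeasurableSpace.comap
        (fun ω => fun k : Fin K => if P k ω ≤ u then (1 : ℝ) else 0) inferInstance)
        ≤ (inferInstance : MeasurableSpace Ω) := by
      refine iSup_le fun u => iSup_le fun hu => Measurable.comap_le ?_
      exact measurable_pi_lambda _ fun j =>
        Measurable.ite (measurableSet_le (hP j) measurable_const) measurable_const
          measurable_const
    rw [Set.iUnion_inter, Set.iUnion_inter,
      measure_iUnion (fun i j hij => ((hdisj hij).mono Set.inter_subset_left
        Set.inter_subset_left)) (fun i => (hmle _ (hfmeas i)).inter (hEcMeas s)),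
      measure_iUnion (fun i j hij => ((hdisj hij).mono Set.inter_subset_left
        Set.inter_subset_left)) (fun i => (hmle _ (hfmeas i)).inter (hEcMeas t)),
      ← ENNReal.tsum_mul_left]
    exact tsum_congr fun i => hIH i

end AuxBM

/-- If the null p-values are i.i.d. uniform on `[0,1]` and independent of the others, then
for `0 < s ≤ t ≤ 1`, `E[F(s) ∣ 𝓕_t] = (s/t) F(t)` a.s., where
`F(u) = |{k ∈ 𝒩 : P_k ≤ u}|` and `𝓕_t = σ{(1_{P_1 ≤ u}, …, 1_{P_K ≤ u}) : u ∈ [t,1]}`;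
i.e. `u ↦ F(u)/u` is a backward martingale on `(0,1]`. -/
theorem backward_martingale_null_counts
    {Ω : Type*} [MeasurableSpace Ω] (μ : Measure Ω) [IsProbabilityMeasure μ]
    {K : ℕ} (P : Fin K → Ω → ℝ) (hP : ∀ k, Measurable (P k)) (N : Finset (Fin K))
    (h_unif : ∀ k ∈ N, μ.map (P k) = volume.restrict (Set.Icc (0 : ℝ) 1))
    (h_iid : iIndepFun (fun k : {k // k ∈ N} => P k.1) μ)
    (h_block : IndepFun (fun ω => fun k : {k // k ∈ N} => P k.1 ω)
      (fun ω => fun k : {k // k ∉ N} => P k.1 ω) μ)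
    {s t : ℝ} (hs : 0 < s) (hst : s ≤ t) (ht : t ≤ 1) :
    μ[(fun ω => ((N.filter (fun k => P k ω ≤ s)).card : ℝ)) |
        ⨆ u ∈ Set.Icc t (1 : ℝ), MeasurableSpace.comap
          (fun ω => fun k : Fin K => if P k ω ≤ u then (1 : ℝ) else 0) inferInstance]
      =ᵐ[μ] fun ω => s / t * ((N.filter (fun k => P k ω ≤ t)).card : ℝ) := by
  classical
  have ht0 : 0 < t := lt_of_lt_of_le hs hst
  have hmle : (⨆ u ∈ Set.Icc t (1 : ℝ), MeasurableSpace.comap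
      (fun ω => fun k : Fin K => if P k ω ≤ u then (1 : ℝ) else 0) inferInstance)
      ≤ (inferInstance : MeasurableSpace Ω) := by
    refine iSup_le fun u => iSup_le fun hu => Measurable.comap_le ?_
    exact measurable_pi_lambda _ fun j =>
      Measurable.ite (measurableSet_le (hP j) measurable_const) measurable_const measurable_const
  haveI : SigmaFinite (μ.trim hmle) := by
    haveI := isFiniteMeasure_trim (μ := μ) hmle
    infer_instance
  have hEcMeas : ∀ (j : Fin K) (c : ℝ), MeasurableSet {ω | P j ω ≤ c} := fun j c =>
    measurableSet_le (hP j) measurable_const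
  -- rewrite of card function as sum of indicators
  have hfsum : ∀ (c : ℝ) (ω : Ω), ((N.filter (fun k => P k ω ≤ c)).card : ℝ)
      = ∑ k ∈ N, Set.indicator {ω' | P k ω' ≤ c} (fun _ => (1 : ℝ)) ω := by
    intro c ω
    rw [Finset.card_filter]
    push_cast
    refine Finset.sum_congr rfl fun j _ => ?_
    by_cases h : P j ω ≤ c
    · simp [Set.indicator_apply, h]
    · simp [Set.indicator_apply, h]
  have hint : ∀ c : ℝ, Integrable (fun ω => ((N.filter (fun k => P k ω ≤ c)).card : ℝ)) μ := by
    intro c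
    have he : (fun ω => ((N.filter (fun k => P k ω ≤ c)).card : ℝ))
        = fun ω => ∑ k ∈ N, Set.indicator {ω' | P k ω' ≤ c} (fun _ => (1 : ℝ)) ω := by
      funext ω; exact hfsum c ω
    rw [he]
    exact integrable_finset_sum _ fun j _ => (integrable_const (1 : ℝ)).indicator (hEcMeas j c)
  -- set integral of the card function
  have hsetint : ∀ (c : ℝ) (A : Set Ω), MeasurableSet A →
      ∫ x in A, ((N.filter (fun k => P k x ≤ c)).card : ℝ) ∂μ
        = ∑ k ∈ N, (μ ({ω | P k ω ≤ c} ∩ A)).toReal := by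
    intro c A hA
    have he : (fun ω => ((N.filter (fun k => P k ω ≤ c)).card : ℝ))
        = fun ω => ∑ k ∈ N, Set.indicator {ω' | P k ω' ≤ c} (fun _ => (1 : ℝ)) ω := by
      funext ω; exact hfsum c ω
    rw [he, integral_finset_sum _ fun j _ =>
      ((integrable_const (1 : ℝ)).indicator (hEcMeas j c)).integrableOn]
    refine Finset.sum_congr rfl fun j _ => ?_
    rw [integral_indicator_const (1 : ℝ) (hEcMeas j c), measureReal_def, Measure.restrict_apply (hEcMeas j c),
      smul_eq_mul, mul_one]
  -- apply uniqueness of conditional expectation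
  refine (ae_eq_condExp_of_forall_setIntegral_eq hmle (hint s) ?_ ?_ ?_).symm
  · intro A _ _
    exact (Integrable.const_mul (hint t) (s / t)).integrableOn
  · intro A hA _
    have hA0 : MeasurableSet A := hmle _ hA
    rw [integral_const_mul, hsetint s A hA0, hsetint t A hA0, Finset.mul_sum]
    refine Finset.sum_congr rfl fun j hj => ?_
    have hk := bm_key hP h_unif h_iid h_block hs hst ht hj hA
    rw [Set.inter_comm {ω | P j ω ≤ t} A, Set.inter_comm {ω | P j ω ≤ s} A, hk,
      ENNReal.toReal_mul, ENNReal.toReal_ofReal (div_nonneg hs.le ht0.le)]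
  · -- a.e. strong measurability w.r.t. the sub-σ-algebra
    have hsetF : ∀ j : Fin K, MeasurableSet[⨆ u ∈ Set.Icc t (1 : ℝ), MeasurableSpace.comap
        (fun ω => fun k : Fin K => if P k ω ≤ u then (1 : ℝ) else 0) inferInstance]
        {ω | P j ω ≤ t} := by
      intro j
      have hle : MeasurableSpace.comap
          (fun ω => fun k : Fin K => if P k ω ≤ t then (1 : ℝ) else 0) inferInstance
          ≤ ⨆ u ∈ Set.Icc t (1 : ℝ), MeasurableSpace.comap
            (fun ω => fun k : Fin K => if P k ω ≤ u then (1 : ℝ) else 0) inferInstance :=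
        le_iSup₂ (f := fun (u : ℝ) (_ : u ∈ Set.Icc t 1) => MeasurableSpace.comap
          (fun ω => fun k : Fin K => if P k ω ≤ u then (1 : ℝ) else 0) inferInstance)
          t ⟨le_rfl, ht⟩
      have hset : {ω | P j ω ≤ t} = (fun ω => fun k : Fin K =>
          if P k ω ≤ t then (1 : ℝ) else 0) ⁻¹' ((fun x : Fin K → ℝ => x j) ⁻¹' {1}) := by
        ext ω
        simp only [Set.mem_setOf_eq, Set.mem_preimage, Set.mem_singleton_iff]
        by_cases h : P j ω ≤ t
        · simp [h]
        · simp [h]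
      rw [hset]
      exact hle _ ⟨(fun x : Fin K → ℝ => x j) ⁻¹' {1},
        (measurable_pi_apply j) (measurableSet_singleton (1 : ℝ)), rfl⟩
    have hmeasT : Measurable[⨆ u ∈ Set.Icc t (1 : ℝ), MeasurableSpace.comap
        (fun ω => fun k : Fin K => if P k ω ≤ u then (1 : ℝ) else 0) inferInstance]
        (fun ω => s / t * ((N.filter (fun k => P k ω ≤ t)).card : ℝ)) :=
      bm_meas_target N P (s / t) t (fun j _ => hsetF j)
    exact StronglyMeasurable.aestronglyMeasurable hmeasT.stronglyMeasurable
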